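/- Let H' ⊂ H be symplectic Z-modules of ranks 2g' and 2g respectively, with g' < g, where H' is embedded symplectically (i.e., as the span of part of a symplectic basis of H). Then the composite map ∧³H' → ∧³H → (∧³H)/i(H) is injective, where i : H → ∧³H is the standard embedding h ↦ h∧ω. -/

import Mathlib

set_option linter.unnecessarySeqFocus false

open ExteriorAlgebra

section Aux

variable {g g' : ℕ} {H : Type} [AddCommGroup H] [Module ℤ H]

/-- Trilinear alternating form given by a 3x3 determinant of coordinates. -/
noncomputable def triForm (e : Module.Basis (Fin g ⊕ Fin g) ℤ H) (k s t : Fin g ⊕ Fin g) :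
    H [⋀^Fin 3]→ₗ[ℤ] ℤ :=
  (Matrix.detRowAlternating).compLinearMap
    (LinearMap.pi fun r : Fin 3 => ![e.coord k, e.coord s, e.coord t] r)

lemma triForm_apply (e : Module.Basis (Fin g ⊕ Fin g) ℤ H) (k s t : Fin g ⊕ Fin g)
    (u v w : H) :
    triForm e k s t ![u, v, w] =
      e.coord k u * (e.coord s v * e.coord t w - e.coord t v * e.coord s w)
      - e.coord s u * (e.coord k v * e.coord t w - e.coord t v * e.coord k w)
      + e.coord t u * (e.coord k v * e.coord s w - e.coord s v * e.coord k w) := by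
  have h : triForm e k s t ![u, v, w] =
      Matrix.det (Matrix.of fun r c : Fin 3 =>
        (![e.coord k, e.coord s, e.coord t] c) (![u, v, w] r)) := rfl
  rw [h, Matrix.det_fin_three]
  simp [Matrix.of_apply]
  ring

/-- Degree-selecting family: the 3-form in degree 3, zero elsewhere. -/
noncomputable def fam (f : H [⋀^Fin 3]→ₗ[ℤ] ℤ) : ∀ n : ℕ, H [⋀^Fin n]→ₗ[ℤ] ℤ
  | 3 => f
  | _ => 0

lemma lift_triple (f : H [⋀^Fin 3]→ₗ[ℤ] ℤ) (u v w : H) :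
    liftAlternating (fam f) (ι ℤ u * ι ℤ v * ι ℤ w) = f ![u, v, w] := by
  have h : ι ℤ u * ι ℤ v * ι ℤ w = ιMulti ℤ 3 ![u, v, w] := by
    rw [ιMulti_apply]
    simp [List.ofFn_succ, mul_assoc]
  rw [h, liftAlternating_apply_ιMulti]
  rfl

lemma coord_basis (e : Module.Basis (Fin g ⊕ Fin g) ℤ H) (s j : Fin g ⊕ Fin g) :
    e.coord s (e j) = if j = s then 1 else 0 := by
  simp [Module.Basis.coord_apply, Finsupp.single_apply]

/-- A coordinate at an index beyond `g'` kills the span of the first `2g'` basis vectors. -/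
lemma coord_big_eq_zero (hg : g' < g) (e : Module.Basis (Fin g ⊕ Fin g) ℤ H)
    (m : Fin g) (hm : g' ≤ m.val) (s : Fin g ⊕ Fin g)
    (hs : s = Sum.inl m ∨ s = Sum.inr m) (u : H)
    (hu : u ∈ Submodule.span ℤ
      (Set.range fun p : Fin g' ⊕ Fin g' =>
        e (Sum.map (Fin.castLE hg.le) (Fin.castLE hg.le) p))) :
    e.coord s u = 0 := by
  have hle : Submodule.span ℤ
      (Set.range fun p : Fin g' ⊕ Fin g' =>
        e (Sum.map (Fin.castLE hg.le) (Fin.castLE hg.le) p)) ≤ LinearMap.ker (e.coord s) := by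
    rw [Submodule.span_le]
    rintro _ ⟨p, rfl⟩
    simp only [SetLike.mem_coe, LinearMap.mem_ker, coord_basis]
    rw [if_neg]
    rcases p with p | p <;> rcases hs with rfl | rfl <;>
      simp [Sum.map, Fin.ext_iff] <;> intro hh <;> omega
  exact hle hu

/-- The lift vanishes on the span of triple products from `H'` provided one of the
first two coordinate functionals kills `H'`. -/
lemma lift_vanish (e : Module.Basis (Fin g ⊕ Fin g) ℤ H) (k s t : Fin g ⊕ Fin g)
    (H' : Submodule ℤ H)
    (hcol : (∀ u ∈ H', e.coord k u = 0) ∨ (∀ u ∈ H', e.coord s u = 0))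
    (x : ExteriorAlgebra ℤ H)
    (hx : x ∈ Submodule.span ℤ {z : ExteriorAlgebra ℤ H |
        ∃ u v w : H, u ∈ H' ∧ v ∈ H' ∧ w ∈ H' ∧ z = ι ℤ u * ι ℤ v * ι ℤ w}) :
    liftAlternating (fam (triForm e k s t)) x = 0 := by
  induction hx using Submodule.span_induction with
  | mem z hz =>
    obtain ⟨u, v, w, hu, hv, hw, rfl⟩ := hz
    rw [lift_triple, triForm_apply]
    rcases hcol with hc | hc
    · rw [hc u hu, hc v hv, hc w hw]; ring
    · rw [hc u hu, hc v hv, hc w hw]; ring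
  | zero => simp
  | add a b _ _ ha hb => rw [map_add, ha, hb, add_zero]
  | smul c a _ ha => rw [map_smul, ha, smul_zero]

/-- Value of the lift on `ι h * ω`. -/
lemma lift_iota_mul_omega (e : Module.Basis (Fin g ⊕ Fin g) ℤ H) (k : Fin g ⊕ Fin g)
    (m : Fin g) (hk1 : k ≠ Sum.inl m) (hk2 : k ≠ Sum.inr m) (h : H) :
    liftAlternating (fam (triForm e k (Sum.inl m) (Sum.inr m)))
      (ι ℤ h * ∑ i : Fin g, ι ℤ (e (Sum.inl i)) * ι ℤ (e (Sum.inr i))) = e.coord k h := by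
  rw [Finset.mul_sum, map_sum]
  have key : ∀ j : Fin g,
      liftAlternating (fam (triForm e k (Sum.inl m) (Sum.inr m)))
        (ι ℤ h * (ι ℤ (e (Sum.inl j)) * ι ℤ (e (Sum.inr j))))
      = if j = m then e.coord k h else 0 := by
    intro j
    rw [← mul_assoc, lift_triple, triForm_apply]
    simp only [coord_basis]
    by_cases hj : j = m
    · subst hj
      simp [Ne.symm hk1, Ne.symm hk2]
    · simp [hj]
  rw [Finset.sum_congr rfl fun j _ => key j, Finset.sum_ite_eq' Finset.univ m]
  simp

end Aux

/-- If `H' ⊂ H` is the span of the first `2g'` vectors of a symplectic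
basis of a rank-`2g` symplectic `ℤ`-module `H` with `g' < g`, then the composite
`∧³H' → ∧³H → (∧³H)/i(H)` is injective, where `i : h ↦ h ∧ ω` is the standard
embedding. -/
theorem wedge_cube_mod_H_injective (g g' : ℕ) (hg : g' < g)
    (H : Type) [AddCommGroup H] [Module ℤ H]
    (e : Module.Basis (Fin g ⊕ Fin g) ℤ H)
    (ω : ExteriorAlgebra ℤ H)
    (hω : ω = ∑ i : Fin g, ι ℤ (e (Sum.inl i)) * ι ℤ (e (Sum.inr i)))
    (iH : H →ₗ[ℤ] ExteriorAlgebra ℤ H)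
    (hiH : ∀ h : H, iH h = ι ℤ h * ω)
    (H' : Submodule ℤ H)
    (hH' : H' = Submodule.span ℤ
      (Set.range fun p : Fin g' ⊕ Fin g' =>
        e (Sum.map (Fin.castLE hg.le) (Fin.castLE hg.le) p)))
    (W3 : Submodule ℤ (ExteriorAlgebra ℤ H))
    (hW3 : W3 = Submodule.span ℤ {z : ExteriorAlgebra ℤ H |
        ∃ u v w : H, u ∈ H' ∧ v ∈ H' ∧ w ∈ H' ∧ z = ι ℤ u * ι ℤ v * ι ℤ w}) :
    Function.Injective ((LinearMap.range iH).mkQ ∘ₗ W3.subtype) := by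
  rw [← LinearMap.ker_eq_bot, LinearMap.ker_eq_bot']
  rintro ⟨x, hxW⟩ hx0
  rw [Submodule.mk_eq_zero]
  simp only [LinearMap.comp_apply, Submodule.subtype_apply, Submodule.mkQ_apply,
    Submodule.Quotient.mk_eq_zero, LinearMap.mem_range] at hx0
  obtain ⟨h, hh⟩ := hx0
  rw [hiH, hω] at hh
  -- `x` lies in the span of triple products from `H'`
  have hxW' : x ∈ Submodule.span ℤ {z : ExteriorAlgebra ℤ H |
      ∃ u v w : H, u ∈ H' ∧ v ∈ H' ∧ w ∈ H' ∧ z = ι ℤ u * ι ℤ v * ι ℤ w} := by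
    rw [← hW3]; exact hxW
  by_cases hg0 : g' = 0
  · -- `H' = ⊥`, so `W3 = ⊥` and `x = 0`
    subst hg0
    have hH'bot : H' = ⊥ := by
      rw [hH']
      have : IsEmpty (Fin 0 ⊕ Fin 0) := by infer_instance
      rw [Set.range_eq_empty, Submodule.span_empty]
    have : x = 0 := by
      have hle : Submodule.span ℤ {z : ExteriorAlgebra ℤ H |
          ∃ u v w : H, u ∈ H' ∧ v ∈ H' ∧ w ∈ H' ∧ z = ι ℤ u * ι ℤ v * ι ℤ w}
          ≤ (⊥ : Submodule ℤ (ExteriorAlgebra ℤ H)) := by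
        rw [Submodule.span_le]
        rintro z ⟨u, v, w, hu, hv, hw, rfl⟩
        rw [hH'bot, Submodule.mem_bot] at hu
        simp [hu]
      simpa using hle hxW'
    exact this
  · -- `g' ≥ 1`, hence `g ≥ 2`; show `h = 0`
    have hg2 : 2 ≤ g := by omega
    have hcoord : ∀ k : Fin g ⊕ Fin g, e.coord k h = 0 := by
      intro k
      -- choose `m` depending on whether `k` is a "small" or "big" index
      set jv : ℕ := Sum.elim (fun j : Fin g => (j : ℕ)) (fun j : Fin g => (j : ℕ)) k with hjv
      by_cases hks : jv < g'
      · -- k small: use big column m = ⟨g', hg⟩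
        set m : Fin g := ⟨g', hg⟩ with hm
        have hk1 : k ≠ Sum.inl m := by
          rcases k with j | j <;> simp_all [Fin.ext_iff] <;> omega
        have hk2 : k ≠ Sum.inr m := by
          rcases k with j | j <;> simp_all [Fin.ext_iff] <;> omega
        have hvan := lift_vanish e k (Sum.inl m) (Sum.inr m) H'
          (Or.inr fun u hu => coord_big_eq_zero hg e m (le_refl g') (Sum.inl m) (Or.inl rfl) u
            (hH' ▸ hu)) x hxW'
        rw [← hh, lift_iota_mul_omega e k m hk1 hk2 h] at hvan
        exact hvan
      · -- k big: coord k kills H'; pick any m ≠ index of k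
        push_neg at hks
        obtain ⟨j, hkj⟩ : ∃ j : Fin g, (k = Sum.inl j ∨ k = Sum.inr j) ∧ g' ≤ j.val := by
          rcases k with j | j <;> exact ⟨j, by simp_all, by simp_all⟩
        obtain ⟨hkj, hjbig⟩ := hkj
        obtain ⟨m, hmj⟩ : ∃ m : Fin g, m ≠ j := by
          have : Nontrivial (Fin g) := Fin.nontrivial_iff_two_le.mpr hg2
          exact exists_ne j
        have hk1 : k ≠ Sum.inl m := by
          rcases hkj with rfl | rfl
          · simpa using fun hh => hmj hh.symm
          · simp
        have hk2 : k ≠ Sum.inr m := by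
          rcases hkj with rfl | rfl
          · simp
          · simpa using fun hh => hmj hh.symm
        have hvan := lift_vanish e k (Sum.inl m) (Sum.inr m) H'
          (Or.inl fun u hu => coord_big_eq_zero hg e j hjbig k hkj u (hH' ▸ hu)) x hxW'
        rw [← hh, lift_iota_mul_omega e k m hk1 hk2 h] at hvan
        exact hvan
    have hh0 : h = 0 := e.forall_coord_eq_zero_iff.mp hcoord
    rw [← hh, hh0, map_zero, zero_mul]
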